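/- Finite convergence of logic-based Benders decomposition (Theorem 1, abstract form): let D be a finite nonempty set, f : D → ℝ, and B : D → D → ℝ with B(x̄, x) ≤ f(x) for all x̄, x ∈ D (validity) and B(x̄, x̄) = f(x̄) for all x̄ ∈ D (exactness). Let x⁰, x¹, x², … be any sequence in D such that for every k ≥ 1, xᵏ minimizes the function x ↦ max_{0≤i<k} B(xⁱ, x) over D. Then there exists l with 1 ≤ l ≤ |D| such that min_{x∈D} max_{0≤i<l} B(xⁱ, x) = min_{0≤i<l} f(xⁱ); that is, the Benders stopping criterion is reached after at most |D| iterations. -/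

import Mathlib

theorem main {ι : Type*} [Fintype ι] [Nonempty ι]
    (f : ι → ℝ) (B : ι → ι → ℝ)
    (hvalid : ∀ xbar x : ι, B xbar x ≤ f x)
    (hexact : ∀ xbar : ι, B xbar xbar = f xbar)
    (x : ℕ → ι)
    (hmin : ∀ k : ℕ, ∀ _hk : 1 ≤ k, ∀ y : ι,
      (Finset.range k).sup' (Finset.nonempty_range_iff.mpr (Nat.one_le_iff_ne_zero.mp _hk))
          (fun i => B (x i) (x k)) ≤
        (Finset.range k).sup' (Finset.nonempty_range_iff.mpr (Nat.one_le_iff_ne_zero.mp _hk))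
          (fun i => B (x i) y))
    (a b : ℕ) (h : a < b) (hb : b ≤ Fintype.card ι) (heq : x a = x b) :
    ∃ l : ℕ, ∃ _hl : 1 ≤ l, l ≤ Fintype.card ι ∧
      Finset.univ.inf' Finset.univ_nonempty
          (fun y => (Finset.range l).sup' (Finset.nonempty_range_iff.mpr (Nat.one_le_iff_ne_zero.mp _hl))
            (fun i => B (x i) y)) =
        (Finset.range l).inf' (Finset.nonempty_range_iff.mpr (Nat.one_le_iff_ne_zero.mp _hl))
          (fun i => f (x i)) := by
  have hb1 : 1 ≤ b := by omega
  refine ⟨b, hb1, hb, le_antisymm ?_ ?_⟩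
  · apply Finset.le_inf'
    intro i hi
    refine le_trans (Finset.inf'_le _ (Finset.mem_univ (x i))) ?_
    exact Finset.sup'_le _ _ fun j _ => hvalid (x j) (x i)
  · apply Finset.le_inf'
    intro y _
    calc (Finset.range b).inf' (Finset.nonempty_range_iff.mpr (Nat.one_le_iff_ne_zero.mp hb1))
          (fun i => f (x i)) ≤ f (x a) :=
          Finset.inf'_le _ (Finset.mem_range.mpr h)
      _ = B (x a) (x b) := by rw [heq, hexact]
      _ ≤ (Finset.range b).sup' (Finset.nonempty_range_iff.mpr (Nat.one_le_iff_ne_zero.mp hb1))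
            (fun i => B (x i) (x b)) :=
          Finset.le_sup' (fun i => B (x i) (x b)) (Finset.mem_range.mpr h)
      _ ≤ _ := hmin b hb1 y



/-- Theorem 1 (abstract form): finite convergence of logic-based Benders
decomposition.  With valid and exact Benders cuts over a finite master domain, if
each master solution `x k` (for `k ≥ 1`) minimizes `y ↦ max_{0≤i<k} B (x i) y`,
then within at most `|D|` iterations the stopping criterion
`min_y max_{0≤i<l} B (x i) y = min_{0≤i<l} f (x i)` is reached. -/
theorem stmt_7 {ι : Type*} [Fintype ι] [Nonempty ι]
    (f : ι → ℝ) (B : ι → ι → ℝ)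
    (hvalid : ∀ xbar x : ι, B xbar x ≤ f x)
    (hexact : ∀ xbar : ι, B xbar xbar = f xbar)
    (x : ℕ → ι)
    (hmin : ∀ k : ℕ, ∀ _hk : 1 ≤ k, ∀ y : ι,
      (Finset.range k).sup' (Finset.nonempty_range_iff.mpr (by omega))
          (fun i => B (x i) (x k)) ≤
        (Finset.range k).sup' (Finset.nonempty_range_iff.mpr (by omega))
          (fun i => B (x i) y)) :
    ∃ l : ℕ, ∃ _hl : 1 ≤ l, l ≤ Fintype.card ι ∧
      Finset.univ.inf' Finset.univ_nonempty
          (fun y => (Finset.range l).sup' (Finset.nonempty_range_iff.mpr (by omega))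
            (fun i => B (x i) y)) =
        (Finset.range l).inf' (Finset.nonempty_range_iff.mpr (by omega))
          (fun i => f (x i)) := by
  obtain ⟨a, ha, b, hb, hab, heq⟩ :=
    Finset.exists_ne_map_eq_of_card_lt_of_maps_to
      (s := Finset.range (Fintype.card ι + 1)) (t := (Finset.univ : Finset ι))
      (by simp) (fun i _ => Finset.mem_univ (x i))
  simp only [Finset.mem_range] at ha hb
  rcases lt_or_gt_of_ne hab with h | h
  · exact main f B hvalid hexact x hmin a b h (by omega) heq
  · exact main f B hvalid hexact x hmin b a h (by omega) heq.symm
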